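/- Let f : [0,∞) → ℝ be convex and nondecreasing, and let a, b, c, d ∈ ℝ satisfy (d − a)(c − b) ≥ 0 (the couples (d,a) and (c,b) have the same orientation). Then f(|a − b|) + f(|c − d|) ≤ f(|a − c|) + f(|b − d|). -/

import Mathlib

/-- Two-point weak majorization for convex nondecreasing functions. -/
lemma exchange_key (f : ℝ → ℝ)
    (hconv : ConvexOn ℝ (Set.Ici 0) f) (hmono : MonotoneOn f (Set.Ici 0))
    {x1 x2 y1 y2 : ℝ} (hx2 : 0 ≤ x2) (h12 : x2 ≤ x1) (hy2 : 0 ≤ y2)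
    (h1 : x1 ≤ y1) (hs : x1 + x2 ≤ y1 + y2) :
    f x1 + f x2 ≤ f y1 + f y2 := by
  have hx1 : 0 ≤ x1 := le_trans hx2 h12
  have hy1 : 0 ≤ y1 := le_trans hx1 h1
  rcases le_total x2 y2 with h2 | h2
  · exact add_le_add (hmono hx1 hy1 h1) (hmono hx2 hy2 h2)
  · -- y2 ≤ x2 ≤ x1 ≤ S := x1 + x2 - y2 ≤ y1
    set S := x1 + x2 - y2 with hS
    have hx1S : x1 ≤ S := by simp [hS]; linarith
    have hSy1 : S ≤ y1 := by simp [hS]; linarith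
    have hS0 : 0 ≤ S := le_trans hx1 hx1S
    rcases eq_or_lt_of_le (le_trans h2 (le_trans h12 hx1S)) with heq | hlt
    · -- y2 = S, so all equal
      have e1 : x1 = y2 := le_antisymm (by linarith) (le_trans h2 h12)
      have e2 : x2 = y2 := le_antisymm (by linarith) h2
      have : f y2 ≤ f y1 := hmono hy2 hy1 (by linarith)
      rw [e1, e2]; linarith
    · set t := (x1 - y2) / (S - y2) with ht
      have hd : 0 < S - y2 := by linarith
      have ht0 : 0 ≤ t := div_nonneg (by linarith [le_trans h2 h12]) hd.le
      have ht1 : t ≤ 1 := by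
        rw [ht, div_le_one hd]; linarith
      have hadd : (1 - t) + t = 1 := by ring
      have htk : t * (S - y2) = x1 - y2 := by rw [ht]; exact div_mul_cancel₀ _ hd.ne'
      have hx1eq : (1 - t) • y2 + t • S = x1 := by
        simp only [smul_eq_mul]; linear_combination htk
      have hx2eq : t • y2 + (1 - t) • S = x2 := by
        simp only [smul_eq_mul]; linear_combination -htk + hS
      have c1 := hconv.2 (Set.mem_Ici.2 hy2) (Set.mem_Ici.2 hS0)
          (by linarith : (0:ℝ) ≤ 1 - t) ht0 hadd
      have c2 := hconv.2 (Set.mem_Ici.2 hy2) (Set.mem_Ici.2 hS0)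
          ht0 (by linarith : (0:ℝ) ≤ 1 - t) (by ring)
      rw [hx1eq] at c1
      rw [hx2eq] at c2
      have hfS : f S ≤ f y1 := hmono hS0 hy1 hSy1
      have : f x1 + f x2 ≤ f y2 + f S := by
        calc f x1 + f x2 ≤ ((1-t) * f y2 + t * f S) + (t * f y2 + (1-t) * f S) :=
              add_le_add c1 c2
          _ = f y2 + f S := by ring
      linarith


lemma exchange_abs_sum (a b c d : ℝ) (h : (d - a) * (c - b) ≥ 0) :
    |a-b| + |c-d| ≤ |a-c| + |b-d| := by
  rcases abs_cases (a-b) with ⟨e1,_⟩|⟨e1,_⟩ <;>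
  rcases abs_cases (c-d) with ⟨e2,_⟩|⟨e2,_⟩ <;>
  rcases abs_cases (a-c) with ⟨e3,_⟩|⟨e3,_⟩ <;>
  rcases abs_cases (b-d) with ⟨e4,_⟩|⟨e4,_⟩ <;>
  rw [e1,e2,e3,e4] <;> nlinarith

lemma exchange_abs_max (a b c d : ℝ) (h : (d - a) * (c - b) ≥ 0) :
    max |a-b| |c-d| ≤ max |a-c| |b-d| := by
  rw [max_le_iff]
  constructor <;>
  · rw [le_max_iff]
    by_contra hc
    push_neg at hc
    obtain ⟨h1, h2⟩ := hc
    rcases abs_cases (a-b) with ⟨e1,_⟩|⟨e1,_⟩ <;>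
    rcases abs_cases (c-d) with ⟨e2,_⟩|⟨e2,_⟩ <;>
    rcases abs_cases (a-c) with ⟨e3,_⟩|⟨e3,_⟩ <;>
    rcases abs_cases (b-d) with ⟨e4,_⟩|⟨e4,_⟩ <;>
    simp only [e1,e2,e3,e4] at h1 h2 <;>
    nlinarith

/-- **Exchange (crossing) inequality.**  If `f : [0,∞) → ℝ` is convex and nondecreasing
and the couples `(d,a)` and `(c,b)` have the same orientation, i.e.
`(d − a)(c − b) ≥ 0`, then `f(|a − b|) + f(|c − d|) ≤ f(|a − c|) + f(|b − d|)`. -/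
theorem exchange_inequality (f : ℝ → ℝ)
    (hconv : ConvexOn ℝ (Set.Ici 0) f) (hmono : MonotoneOn f (Set.Ici 0))
    (a b c d : ℝ) (h : (d - a) * (c - b) ≥ 0) :
    f |a - b| + f |c - d| ≤ f |a - c| + f |b - d| := by
  have fact1 := exchange_abs_sum a b c d h
  have fact2 := exchange_abs_max a b c d h
  have key := exchange_key f hconv hmono
      (x1 := max |a-b| |c-d|) (x2 := min |a-b| |c-d|)
      (y1 := max |a-c| |b-d|) (y2 := min |a-c| |b-d|)
      (le_min (abs_nonneg _) (abs_nonneg _)) (min_le_max)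
      (le_min (abs_nonneg _) (abs_nonneg _)) fact2
      (by rw [max_add_min, max_add_min]; exact fact1)
  have ex : f (max |a-b| |c-d|) + f (min |a-b| |c-d|) = f |a-b| + f |c-d| := by
    rcases le_total |a-b| |c-d| with hle | hle <;>
      simp [max_eq_right, max_eq_left, min_eq_left, min_eq_right, hle] <;> ring
  have ey : f (max |a-c| |b-d|) + f (min |a-c| |b-d|) = f |a-c| + f |b-d| := by
    rcases le_total |a-c| |b-d| with hle | hle <;>
      simp [max_eq_right, max_eq_left, min_eq_left, min_eq_right, hle] <;> ring
  linarith [key, ex.symm.le, ey.le]
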